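/- arXiv:2507.15312 — 5 statements merged into one kernel-verified Lean document; each statement's English description precedes it below -/
import Mathlib

section
/- The language L = {a^n b^n : n ≥ 1} ∪ {b^n : n ≥ 1} is generated by the external contextual grammar with axioms {ab, b} and selection pairs (Pre({a^n b^m : n,m ≥ 1}), {(a,b)}) and ({b}*, {(ε,b)}), where both selection languages are prefix-closed. -/
/-- An external contextual grammar: a finite list of selection pairs
(selection language, finite list of contexts) and a finite list of axioms. -/
structure ECG (α : Type*) where
  pairs : List (Set (List α) × List (List α × List α))
  axioms : List (List α)

/-- Every context `(u, v)` satisfies `uv ≠ ε`. -/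
def ECG.WellFormed {α : Type*} (G : ECG α) : Prop :=
  ∀ p ∈ G.pairs, ∀ c ∈ p.2, c.1 ++ c.2 ≠ []

/-- External derivation step: `x ⟹ u x v` for a context `(u,v)` of a pair
whose selection language contains `x`. -/
def ECG.Step {α : Type*} (G : ECG α) (x y : List α) : Prop :=
  ∃ p ∈ G.pairs, x ∈ p.1 ∧ ∃ c ∈ p.2, y = c.1 ++ x ++ c.2

/-- The language generated externally: all words derivable from the axioms. -/
def ECG.lang {α : Type*} (G : ECG α) : Set (List α) :=
  { w | ∃ x ∈ G.axioms, Relation.ReflTransGen G.Step x w }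

def PrefixClosed {α : Type*} (L : Set (List α)) : Prop :=
  ∀ x y : List α, x ++ y ∈ L → x ∈ L

/-- `preClosure M` is the set of all prefixes of words of `M`. -/
def preClosure {α : Type*} (M : Set (List α)) : Set (List α) :=
  { x | ∃ y : List α, x ++ y ∈ M }

theorem stmt_12 {α : Type*} (a b : α) (hab : a ≠ b)
    (G : ECG α)
    (hG : G = ⟨[(preClosure { w | ∃ n ≥ 1, ∃ m ≥ 1,
                    w = List.replicate n a ++ List.replicate m b }, [([a], [b])]),
                ({ w | ∃ n : ℕ, w = List.replicate n b }, [([], [b])])],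
               [[a, b], [b]]⟩) :
    (∀ p ∈ G.pairs, PrefixClosed p.1) ∧
    G.lang = { w | ∃ n ≥ 1, w = List.replicate n a ++ List.replicate n b } ∪
             { w | ∃ n ≥ 1, w = List.replicate n b } := by
  subst hG
  constructor
  · intro p hp
    simp only [List.mem_cons, List.mem_singleton, List.not_mem_nil, or_false] at hp
    rcases hp with rfl | rfl
    · intro x y hxy
      obtain ⟨z, hz⟩ := hxy
      exact ⟨y ++ z, by simpa [List.append_assoc] using hz⟩
    · intro x y hxy
      obtain ⟨n, hn⟩ := hxy
      refine ⟨x.length, List.eq_replicate_iff.mpr ⟨rfl, fun c hc => ?_⟩⟩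
      have : c ∈ List.replicate n b := hn ▸ List.mem_append_left y hc
      exact List.eq_of_mem_replicate this
  · ext w
    constructor
    · rintro ⟨x, hx, hder⟩
      have hx' : (∃ n ≥ 1, x = List.replicate n a ++ List.replicate n b) ∨
          (∃ n ≥ 1, x = List.replicate n b) := by
        simp only [List.mem_cons, List.mem_singleton, List.not_mem_nil, or_false] at hx
        rcases hx with rfl | rfl
        · exact Or.inl ⟨1, le_refl 1, rfl⟩
        · exact Or.inr ⟨1, le_refl 1, rfl⟩
      induction hder with
      | refl => exact hx'
      | tail hder hstep ih =>
        rename_i u v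
        obtain ⟨p, hp, hmem, c, hc, hv⟩ := hstep
        simp only [List.mem_cons, List.mem_singleton, List.not_mem_nil, or_false] at hp
        rcases hp with rfl | rfl
        · -- pair 1: context ([a],[b])
          simp only [List.mem_singleton] at hc
          subst hc
          -- u must be a^n b^n
          rcases ih with ⟨n, hn1, rfl⟩ | ⟨n, hn1, rfl⟩
          · left
            refine ⟨n + 1, by omega, ?_⟩
            rw [hv, List.replicate_succ (a := a), List.replicate_succ' (a := b) (n := n)]
            simp
          · -- b^n ∈ preClosure{a^k b^m} is impossible
            exfalso
            obtain ⟨y, k, hk1, m, hm1, hy⟩ := hmem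
            have hb : (List.replicate n b ++ y).head? = some b := by
              cases n with
              | zero => omega
              | succ n => simp [List.replicate_succ]
            have ha : (List.replicate k a ++ List.replicate m b).head? = some a := by
              cases k with
              | zero => omega
              | succ k => simp [List.replicate_succ]
            rw [hy, ha] at hb
            have h := Option.some.inj hb
            first | exact hab h | exact hab h.symm
        · -- pair 2: context ([],[b])
          simp only [List.mem_singleton] at hc
          subst hc
          obtain ⟨m, hm⟩ := hmem
          rcases ih with ⟨n, hn1, hu⟩ | ⟨n, hn1, hu⟩
          · exfalso
            rw [hu] at hm
            have ha : (List.replicate n a ++ List.replicate n b).head? = some a := by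
              cases n with
              | zero => omega
              | succ n => simp [List.replicate_succ]
            have hb : (List.replicate m b).head? = some a := hm ▸ ha
            cases m with
            | zero => simp at hb
            | succ m =>
              rw [List.replicate_succ, List.head?_cons] at hb
              have h := Option.some.inj hb
              first | exact hab h | exact hab h.symm
          · right
            refine ⟨n + 1, by omega, ?_⟩
            rw [hv, hu, List.replicate_succ' (n := n) (a := b)]
            simp
    · rintro (⟨n, hn1, rfl⟩ | ⟨n, hn1, rfl⟩)
      · refine ⟨[a, b], by simp, ?_⟩
        obtain ⟨k, rfl⟩ : ∃ k, n = k + 1 := ⟨n - 1, by omega⟩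
        clear hn1
        induction k with
        | zero => exact Relation.ReflTransGen.refl
        | succ k ih =>
          refine Relation.ReflTransGen.tail ih ?_
          refine ⟨_, List.mem_cons_self, ⟨[], k + 1, by omega, k + 1, by omega,
            by simp⟩, ([a], [b]), List.mem_singleton_self _, ?_⟩
          rw [List.replicate_succ (a := a), List.replicate_succ' (a := b) (n := k + 1)]
          simp
      · refine ⟨[b], by simp, ?_⟩
        obtain ⟨k, rfl⟩ : ∃ k, n = k + 1 := ⟨n - 1, by omega⟩
        clear hn1
        induction k with
        | zero => exact Relation.ReflTransGen.refl
        | succ k ih =>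
          refine Relation.ReflTransGen.tail ih ?_
          refine ⟨({w | ∃ n, w = List.replicate n b}, [([], [b])]), by simp,
            ⟨k + 1, rfl⟩, ([], [b]), List.mem_singleton_self _, ?_⟩
          rw [List.replicate_succ' (n := k + 1) (a := b)]
          simp
end

section
/- The language L = {a^n b^n : n ≥ 1} ∪ {b^n : n ≥ 1} cannot be generated by any external contextual grammar all of whose selection languages are suffix-closed. -/
def SuffixClosed {α : Type*} (L : Set (List α)) : Prop :=
  ∀ x y : List α, x ++ y ∈ L → y ∈ L

theorem stmt_13 {α : Type*} (a b : α) (hab : a ≠ b) :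
    ¬ ∃ G : ECG α, G.WellFormed ∧ (∀ p ∈ G.pairs, SuffixClosed p.1) ∧
      G.lang = { w | ∃ n ≥ 1, w = List.replicate n a ++ List.replicate n b } ∪
               { w | ∃ n ≥ 1, w = List.replicate n b } := by
  classical
  rintro ⟨G, hwf, hsc, hL⟩
  set K : ℕ := (G.pairs.map (fun p => (p.2.map (fun c => c.1.length + c.2.length)).sum)).sum
    with hKdef
  set Ax : ℕ := (G.axioms.map List.length).sum with hAxdef
  set n : ℕ := K + Ax + 1 with hndef
  have hn1 : 1 ≤ n := by omega
  have hwmem : (List.replicate n a ++ List.replicate n b) ∈ G.lang := by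
    rw [hL]; exact Or.inl ⟨n, hn1, rfl⟩
  obtain ⟨x0, hx0, hder⟩ := hwmem
  have hx0len : x0.length ≤ Ax :=
    List.single_le_sum (fun _ _ => Nat.zero_le _) _ (List.mem_map_of_mem hx0)
  rcases hder.cases_tail with heq | ⟨x, hxd, hstep⟩
  · have : (List.replicate n a ++ List.replicate n b).length = x0.length := by rw [heq]
    simp [List.length_append] at this
    omega
  · obtain ⟨p, hp, hxp, c, hc, hw⟩ := hstep
    have hxL : x ∈ G.lang := ⟨x0, hx0, hxd⟩
    rw [hL] at hxL
    -- bound on contexts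
    have hcb : c.1.length + c.2.length ≤ K := by
      have h1 : c.1.length + c.2.length ≤ (p.2.map (fun c => c.1.length + c.2.length)).sum :=
        List.single_le_sum (fun _ _ => Nat.zero_le _) _ (List.mem_map_of_mem hc)
      have h2 : (p.2.map (fun c => c.1.length + c.2.length)).sum ≤ K :=
        List.single_le_sum (fun _ _ => Nat.zero_le _) _ (List.mem_map_of_mem hp)
      omega
    have hca1 : c.1.count a ≤ c.1.length := List.count_le_length
    have hca2 : c.2.count a ≤ c.2.length := List.count_le_length
    rcases hxL with ⟨m, hm, hx⟩ | ⟨m, hm, hx⟩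
    · -- x = aᵐ bᵐ
      subst hx
      -- counts of a and b in the equation w = c1 ++ x ++ c2
      have hcnta := congrArg (List.count a) hw
      have hcntb := congrArg (List.count b) hw
      simp [List.count_append, List.count_replicate, hab, Ne.symm hab] at hcnta hcntb
      -- the suffix bᵐ is in the selection language and in the language
      have hsuf : List.replicate m b ∈ p.1 :=
        hsc p hp (List.replicate m a) (List.replicate m b) hxp
      have hbl : List.replicate m b ∈ G.lang := by
        rw [hL]; exact Or.inr ⟨m, hm, rfl⟩
      obtain ⟨x1, hx1, hd1⟩ := hbl
      have hw' : (c.1 ++ List.replicate m b ++ c.2) ∈ G.lang :=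
        ⟨x1, hx1, hd1.tail ⟨p, hp, hsuf, c, hc, rfl⟩⟩
      rw [hL] at hw'
      rcases hw' with ⟨k, hk, hkeq⟩ | ⟨k, hk, hkeq⟩
      · have hka := congrArg (List.count a) hkeq
        have hkb := congrArg (List.count b) hkeq
        simp [List.count_append, List.count_replicate, hab, Ne.symm hab] at hka hkb
        omega
      · have hka := congrArg (List.count a) hkeq
        simp [List.count_append, List.count_replicate, hab, Ne.symm hab] at hka
        -- so m = n, then the context is empty
        have hlen := congrArg List.length hw
        simp [List.length_append] at hlen
        have hc1 : c.1 = [] := List.length_eq_zero_iff.mp (by omega)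
        have hc2 : c.2 = [] := List.length_eq_zero_iff.mp (by omega)
        exact hwf p hp c hc (by simp [hc1, hc2])
    · -- x = bᵐ : the context must contain all n occurrences of a, too long
      subst hx
      have hcnta := congrArg (List.count a) hw
      simp [List.count_append, List.count_replicate, hab, Ne.symm hab] at hcnta
      omega
end

section
/- Consider the external contextual grammar over {a,b} with the single selection pair ({a,b}*·{a}, {(b,ε)}) and axioms {ε, a}. Its generated language is L = {b^n a : n ≥ 0} ∪ {ε}, and L cannot be generated by any external contextual grammar all of whose selection languages are prefix-closed. -/
theorem stmt_14 {α : Type*} (a b : α) (hab : a ≠ b)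
    (G : ECG α)
    (hG : G = ⟨[({ w | ∃ u : List α, (∀ c ∈ u, c = a ∨ c = b) ∧ w = u ++ [a] },
                  [([b], [])])],
               [[], [a]]⟩)
    (L : Set (List α))
    (hL : L = { w | ∃ n : ℕ, w = List.replicate n b ++ [a] } ∪ {[]}) :
    G.WellFormed ∧ G.lang = L ∧
    ¬ ∃ G' : ECG α, G'.WellFormed ∧ (∀ p ∈ G'.pairs, PrefixClosed p.1) ∧
      G'.lang = L := by
  subst hG hL
  refine ⟨?_, ?_, ?_⟩
  · -- well-formedness
    intro p hp c hc
    simp only [List.mem_singleton] at hp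
    subst hp
    simp only [List.mem_singleton] at hc
    subst hc
    simp
  · -- generated language is L
    ext w
    constructor
    · rintro ⟨x0, hx0, rtg⟩
      induction rtg with
      | refl =>
        simp only [List.mem_cons, List.mem_singleton, List.not_mem_nil, or_false] at hx0
        rcases hx0 with h | h
        · subst h; exact Or.inr rfl
        · subst h; exact Or.inl ⟨0, by simp⟩
      | tail rt step ih =>
        obtain ⟨p, hp, hsel, c, hc, heq⟩ := step
        simp only [List.mem_singleton] at hp
        subst hp
        simp only [List.mem_singleton] at hc
        subst hc
        obtain ⟨u, hu, hx⟩ := hsel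
        rcases ih with ⟨n, hn⟩ | h
        · exact Or.inl ⟨n + 1, by simp [heq, hn, List.replicate_succ]⟩
        · simp only [Set.mem_singleton_iff] at h
          rw [h] at hx
          exact absurd hx (by simp)
    · rintro (⟨n, rfl⟩ | h)
      · induction n with
        | zero => exact ⟨[a], by simp, Relation.ReflTransGen.refl⟩
        | succ n ih =>
          obtain ⟨x0, hx0, rtg⟩ := ih
          refine ⟨x0, hx0, rtg.tail ?_⟩
          refine ⟨_, List.mem_singleton_self _,
            ⟨List.replicate n b, fun c hc => Or.inr (List.eq_of_mem_replicate hc), rfl⟩,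
            ([b], []), List.mem_singleton_self _, ?_⟩
          simp [List.replicate_succ]
      · simp only [Set.mem_singleton_iff] at h
        subst h
        exact ⟨[], by simp, Relation.ReflTransGen.refl⟩
  · -- impossibility with prefix-closed selection languages
    rintro ⟨G', hWF, hpc, hlang⟩
    set S1 := (G'.axioms.map List.length).sum with hS1
    set S2 := (G'.pairs.map (fun p => (p.2.map (fun c => c.1.length + c.2.length)).sum)).sum
      with hS2
    set N := S1 + S2 + 1 with hN
    have hwL : (List.replicate N b ++ [a]) ∈ G'.lang := by
      rw [hlang]; exact Or.inl ⟨N, rfl⟩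
    obtain ⟨x0, hx0, rtg⟩ := hwL
    have hx0len : x0.length ≤ S1 :=
      List.single_le_sum (fun x _ => Nat.zero_le x) _ (List.mem_map_of_mem hx0)
    rcases rtg.cases_tail with h | ⟨y, rty, step⟩
    · have := congrArg List.length h
      simp at this
      omega
    obtain ⟨p, hp, hsel, c, hc, heq⟩ := step
    have hclen : c.1.length + c.2.length ≤ S2 := by
      have h1 : c.1.length + c.2.length ≤ (p.2.map (fun c => c.1.length + c.2.length)).sum :=
        List.single_le_sum (fun x _ => Nat.zero_le x) _ (List.mem_map_of_mem hc)
      have h2 : (p.2.map (fun c => c.1.length + c.2.length)).sum ≤ S2 :=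
        List.single_le_sum (fun x _ => Nat.zero_le x) _ (List.mem_map_of_mem hp)
      omega
    have hyne : y ≠ [] := by
      intro h
      subst h
      have := congrArg List.length heq
      simp at this
      omega
    have hyL : y ∈ { w | ∃ n : ℕ, w = List.replicate n b ++ [a] } ∪ {[]} := by
      rw [← hlang]; exact ⟨x0, hx0, rty⟩
    rcases hyL with ⟨j, hj⟩ | h
    · subst hj
      -- show c.2 = []
      have hc2 : c.2 = [] := by
        rcases c.2.eq_nil_or_concat with h2 | ⟨l, x, h2⟩
        · exact h2
        · rw [h2] at heq
          simp only [List.concat_eq_append, ← List.append_assoc] at heq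
          obtain ⟨hA, _⟩ := List.append_inj' heq (by simp)
          have hamem : a ∈ List.replicate N b := by
            rw [hA]
            simp
          exact absurd (List.eq_of_mem_replicate hamem) hab
      rw [hc2] at heq
      simp only [List.append_nil, ← List.append_assoc] at heq
      obtain ⟨hA, _⟩ := List.append_inj' heq (by simp)
      -- hA : List.replicate N b = c.1 ++ List.replicate j b
      have hc1ne : c.1 ≠ [] := by
        have := hWF p hp c hc
        rw [hc2] at this
        simpa using this
      have hnilsel : ([] : List α) ∈ p.1 :=
        hpc p hp [] (List.replicate j b ++ [a]) (by rw [List.nil_append]; exact hsel)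
      have hnilL : ([] : List α) ∈ G'.lang := by
        rw [hlang]; exact Or.inr rfl
      obtain ⟨x1, hx1, rtg1⟩ := hnilL
      have hc1lang : c.1 ∈ G'.lang := by
        refine ⟨x1, hx1, rtg1.tail ⟨p, hp, hnilsel, c, hc, ?_⟩⟩
        simp [hc2]
      rw [hlang] at hc1lang
      rcases hc1lang with ⟨k, hk⟩ | h
      · have hamem : a ∈ List.replicate N b := by
          rw [hA]
          exact List.mem_append_left _ (hk ▸ List.mem_append_right _ (List.mem_singleton_self a))
        exact absurd (List.eq_of_mem_replicate hamem) hab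
      · exact hc1ne h
    · exact hyne h
end

section
/- The language L = {a^n b^n : n ≥ 1} ∪ {b^n a^n : n ≥ 1} cannot be generated by any external contextual grammar all of whose selection languages are closed under circular shift. -/
def Circular {α : Type*} (L : Set (List α)) : Prop :=
  ∀ x y : List α, x ++ y ∈ L → y ++ x ∈ L

section Aux

variable {α : Type*} {a b : α}

/-- Any splitting of `a^p ++ b^q` splits either inside the `a` block or the `b` block. -/
lemma split_rep (hab : a ≠ b) {p q : ℕ} {s t : List α}
    (h : s ++ t = List.replicate p a ++ List.replicate q b) :
    (∃ i ≤ p, s = List.replicate i a ∧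
        t = List.replicate (p - i) a ++ List.replicate q b) ∨
    (∃ j ≤ q, s = List.replicate p a ++ List.replicate (q - j) b ∧
        t = List.replicate j b) := by
  rcases List.append_eq_append_iff.mp h with ⟨a', ha1, ha2⟩ | ⟨c', hc1, hc2⟩
  · -- replicate p a = s ++ a', t = a' ++ replicate q b
    left
    have hs : s = List.replicate s.length a := by
      refine List.eq_replicate_length.mpr fun x hx => ?_
      exact List.eq_of_mem_replicate (ha1 ▸ List.mem_append_left _ hx)
    have ha' : a' = List.replicate a'.length a := by
      refine List.eq_replicate_length.mpr fun x hx => ?_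
      exact List.eq_of_mem_replicate (ha1 ▸ List.mem_append_right _ hx)
    have hlen : p = s.length + a'.length := by
      have := congrArg List.length ha1
      simpa using this
    refine ⟨s.length, by omega, hs, ?_⟩
    rw [ha2, ha']
    congr 1
    · congr 1
      omega
  · -- s = replicate p a ++ c', replicate q b = c' ++ t
    right
    have ht : t = List.replicate t.length b := by
      refine List.eq_replicate_length.mpr fun x hx => ?_
      exact List.eq_of_mem_replicate (hc2 ▸ List.mem_append_right _ hx)
    have hc' : c' = List.replicate c'.length b := by
      refine List.eq_replicate_length.mpr fun x hx => ?_
      exact List.eq_of_mem_replicate (hc2 ▸ List.mem_append_left _ hx)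
    have hlen : q = c'.length + t.length := by
      have := congrArg List.length hc2
      simpa using this
    refine ⟨t.length, by omega, ?_, ht⟩
    rw [hc1, hc']
    congr 2
    omega

lemma ab_inj (hab : a ≠ b) {p q r s : ℕ}
    (h : List.replicate p a ++ List.replicate q b =
         List.replicate r a ++ List.replicate s b) : p = r ∧ q = s := by
  classical
  have ha := congrArg (List.count a) h
  have hb := congrArg (List.count b) h
  simp [List.count_append, List.count_replicate, hab, Ne.symm hab] at ha hb
  exact ⟨ha, hb⟩

lemma mem_a_left {m : ℕ} (hm : 1 ≤ m) (l : List α) :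
    a ∈ List.replicate m a ++ l :=
  List.mem_append_left _ (List.mem_replicate.mpr ⟨by omega, rfl⟩)

lemma mem_a_right {m : ℕ} (hm : 1 ≤ m) (l : List α) :
    a ∈ l ++ List.replicate m a :=
  List.mem_append_right _ (List.mem_replicate.mpr ⟨by omega, rfl⟩)

/-- `b^m a^m` is never of the form `a^p b^q` when `m ≥ 1`. -/
lemma noBA (hab : a ≠ b) {m p q : ℕ} (hm : 1 ≤ m)
    (h : List.replicate m b ++ List.replicate m a =
         List.replicate p a ++ List.replicate q b) : False := by
  rcases Nat.eq_zero_or_pos p with hp | hp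
  · subst hp
    simp only [List.replicate_zero, List.nil_append] at h
    have : a ∈ List.replicate q b := h ▸ mem_a_right hm _
    exact hab (List.eq_of_mem_replicate this)
  · obtain ⟨m', rfl⟩ : ∃ m', m = m' + 1 := ⟨m - 1, by omega⟩
    obtain ⟨p', rfl⟩ : ∃ p', p = p' + 1 := ⟨p - 1, by omega⟩
    simp only [List.replicate_succ, List.cons_append, List.cons.injEq] at h
    exact hab h.1.symm

/-- The key factorization lemma: if `u x v = a^n b^n` with `x ∈ L` and `uv ≠ ε`,
then `u = a^k`, `v = b^k`, `x = a^m b^m` with `k, m ≥ 1`. -/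
lemma factor (hab : a ≠ b) {n : ℕ} {u x v : List α}
    (h : u ++ (x ++ v) = List.replicate n a ++ List.replicate n b)
    (hx : (∃ m ≥ 1, x = List.replicate m a ++ List.replicate m b) ∨
          (∃ m ≥ 1, x = List.replicate m b ++ List.replicate m a))
    (hne : u ++ v ≠ []) :
    ∃ k m, 1 ≤ k ∧ 1 ≤ m ∧ u = List.replicate k a ∧ v = List.replicate k b ∧
      x = List.replicate m a ++ List.replicate m b := by
  have hbmem : b ∈ x := by
    rcases hx with ⟨m, hm, rfl⟩ | ⟨m, hm, rfl⟩
    · exact List.mem_append_right _ (List.mem_replicate.mpr ⟨by omega, rfl⟩)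
    · exact List.mem_append_left _ (List.mem_replicate.mpr ⟨by omega, rfl⟩)
  have hamem : a ∈ x := by
    rcases hx with ⟨m, hm, rfl⟩ | ⟨m, hm, rfl⟩
    · exact mem_a_left hm _
    · exact mem_a_right hm _
  rcases split_rep hab h with ⟨i, hi, hu, hrest⟩ | ⟨j, hj, hu, hrest⟩
  · -- u = a^i, x ++ v = a^(n-i) ++ b^n
    rcases split_rep hab hrest with ⟨i', hi', hx', hv⟩ | ⟨j, hj, hx', hv⟩
    · -- x = a^i' : contradiction, b ∈ x
      exact absurd (List.eq_of_mem_replicate (hx' ▸ hbmem)) (Ne.symm hab)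
    · -- x = a^(n-i) ++ b^(n-j), v = b^j
      rcases hx with ⟨m, hm, hxm⟩ | ⟨m, hm, hxm⟩
      · have h2 := ab_inj hab (hxm ▸ hx')
        have hij : j = i := by omega
        subst hij
        have hk1 : 1 ≤ j := by
          rcases Nat.eq_zero_or_pos j with h0 | h1
          · exfalso
            apply hne
            rw [hu, hv, h0]
            simp
          · exact h1
        exact ⟨j, m, hk1, hm, hu, hv, hxm⟩
      · exact absurd (hxm ▸ hx') (fun hh => noBA hab hm hh)
  · -- x ++ v = b^j : contradiction, a ∈ x
    have : a ∈ List.replicate j b := hrest ▸ List.mem_append_left _ hamem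
    exact absurd (List.eq_of_mem_replicate this) hab

end Aux

theorem stmt_16 {α : Type*} (a b : α) (hab : a ≠ b) :
    ¬ ∃ G : ECG α, G.WellFormed ∧ (∀ p ∈ G.pairs, Circular p.1) ∧
      G.lang = { w | ∃ n ≥ 1, w = List.replicate n a ++ List.replicate n b } ∪
               { w | ∃ n ≥ 1, w = List.replicate n b ++ List.replicate n a } := by
  classical
  rintro ⟨G, hWF, hCirc, hL⟩
  set N := (G.axioms.map List.length).sum + 1 with hN
  have hN1 : 1 ≤ N := by omega
  have hw : (List.replicate N a ++ List.replicate N b) ∈ G.lang := by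
    rw [hL]
    exact Or.inl ⟨N, hN1, rfl⟩
  obtain ⟨x0, hx0, hder⟩ := hw
  rcases hder.cases_tail with heq | ⟨y, hy, hstep⟩
  · -- the word equals an axiom: length contradiction
    have hlen : x0.length ≤ (G.axioms.map List.length).sum :=
      List.single_le_sum (fun _ _ => Nat.zero_le _) _
        (List.mem_map_of_mem (f := List.length) hx0)
    have := congrArg List.length heq
    simp only [List.length_append, List.length_replicate] at this
    omega
  · have hyL : y ∈ G.lang := ⟨x0, hx0, hy⟩
    rw [hL] at hyL
    obtain ⟨p, hp, hyp, c, hc, hwc⟩ := hstep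
    have hne := hWF p hp c hc
    have hyform : (∃ m ≥ 1, y = List.replicate m a ++ List.replicate m b) ∨
        (∃ m ≥ 1, y = List.replicate m b ++ List.replicate m a) := by
      simpa [Set.mem_union, Set.mem_setOf_eq] using hyL
    have heq' : c.1 ++ (y ++ c.2) = List.replicate N a ++ List.replicate N b := by
      rw [← List.append_assoc, ← hwc]
    obtain ⟨k, m, hk, hm, hu, hv, hxy⟩ := factor hab heq' hyform hne
    -- circularity: b^m a^m is also selected
    have hyc : (List.replicate m b ++ List.replicate m a) ∈ p.1 :=
      hCirc p hp (List.replicate m a) (List.replicate m b) (hxy ▸ hyp)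
    have hz : (List.replicate m b ++ List.replicate m a) ∈ G.lang := by
      rw [hL]
      exact Or.inr ⟨m, hm, rfl⟩
    obtain ⟨x1, hx1, hz1⟩ := hz
    have hw' : (c.1 ++ (List.replicate m b ++ List.replicate m a) ++ c.2) ∈ G.lang :=
      ⟨x1, hx1, hz1.tail ⟨p, hp, hyc, c, hc, rfl⟩⟩
    rw [hL, hu, hv] at hw'
    simp only [Set.mem_union, Set.mem_setOf_eq] at hw'
    rcases hw' with ⟨n, hn1, heq2⟩ | ⟨n, hn1, heq2⟩
    · -- a^k b^m a^m b^k = a^n b^n : impossible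
      have heq3 : (List.replicate k a ++ List.replicate m b) ++
          (List.replicate m a ++ List.replicate k b) =
          List.replicate n a ++ List.replicate n b := by
        rw [← heq2]
        simp [List.append_assoc]
      rcases split_rep hab heq3 with ⟨i, _, hs, _⟩ | ⟨j, _, _, ht⟩
      · have : b ∈ List.replicate i a :=
          hs ▸ List.mem_append_right _ (List.mem_replicate.mpr ⟨by omega, rfl⟩)
        exact (Ne.symm hab) (List.eq_of_mem_replicate this)
      · have : a ∈ List.replicate j b := ht ▸ mem_a_left hm _
        exact hab (List.eq_of_mem_replicate this)
    · -- a^k b^m a^m b^k = b^n a^n : heads differ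
      obtain ⟨k', rfl⟩ : ∃ k', k = k' + 1 := ⟨k - 1, by omega⟩
      obtain ⟨n', rfl⟩ : ∃ n', n = n' + 1 := ⟨n - 1, by omega⟩
      rw [List.replicate_succ, List.replicate_succ (a := b) (n := n')] at heq2
      simp only [List.cons_append, List.cons.injEq] at heq2
      exact hab heq2.1
end

section
/- The language L = {b^3 a^n : n ≥ 1} ∪ {b^2} cannot be generated by any external contextual grammar all of whose selection languages are prefix-closed. -/
theorem stmt_17 {α : Type*} (a b : α) (hab : a ≠ b) :
    ¬ ∃ G : ECG α, G.WellFormed ∧ (∀ p ∈ G.pairs, PrefixClosed p.1) ∧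
      G.lang = { w | ∃ n ≥ 1, w = List.replicate 3 b ++ List.replicate n a } ∪
               {List.replicate 2 b} := by
  rintro ⟨G, hWF, hPC, hL⟩
  classical
  set C := (G.pairs.map (fun p => (p.2.map (fun c => c.1.length + c.2.length)).sum)).sum with hC
  set M := C + (G.axioms.map List.length).sum + 3 with hMdef
  have hctx : ∀ p ∈ G.pairs, ∀ c ∈ p.2, c.1.length + c.2.length ≤ C := by
    intro p hp c hc
    calc c.1.length + c.2.length
        ≤ (p.2.map (fun c => c.1.length + c.2.length)).sum :=
          List.single_le_sum (by intro x _; exact Nat.zero_le _) _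
            (List.mem_map_of_mem hc)
      _ ≤ C :=
          List.single_le_sum (by intro x _; exact Nat.zero_le _) _
            (List.mem_map_of_mem hp)
  have hw : (List.replicate 3 b ++ List.replicate M a) ∈ G.lang := by
    rw [hL]; left; exact ⟨M, by omega, rfl⟩
  obtain ⟨x0, hx0, hrtg⟩ := hw
  rcases hrtg.cases_tail with heq | ⟨y, hy, hstep⟩
  · -- w is an axiom : length contradiction
    have hmem : (List.replicate 3 b ++ List.replicate M a).length ∈ G.axioms.map List.length :=
      List.mem_map_of_mem (heq ▸ hx0)
    have hle := List.single_le_sum (l := G.axioms.map List.length)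
      (by intro x _; exact Nat.zero_le _) _ hmem
    simp only [List.length_append, List.length_replicate] at hle
    omega
  · have hyL : y ∈ G.lang := ⟨x0, hx0, hy⟩
    rw [hL] at hyL
    obtain ⟨p, hp, hyp, c, hc, hw_eq⟩ := hstep
    have hcle := hctx p hp c hc
    rcases hyL with ⟨k, hk1, hyeq⟩ | hy2
    · -- y = b^3 a^k
      subst hyeq
      -- count of b: c.1 contains no b
      have hcount := congrArg (List.count b) hw_eq
      simp [List.count_append, List.count_replicate, hab, Ne.symm hab] at hcount
      have hbnot : b ∉ c.1 := by
        intro hmem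
        have := List.count_pos_iff.mpr hmem  -- 0 < count b c.1 ?
        omega
      -- c.1 = []
      have hc1 : c.1 = [] := by
        cases hc1e : c.1 with
        | nil => rfl
        | cons h t =>
          exfalso
          rw [hc1e] at hw_eq
          have hhd := congrArg List.head? hw_eq
          simp [List.replicate_succ] at hhd
          exact hbnot (by rw [hc1e, hhd]; exact List.mem_cons_self)
      rw [hc1, List.nil_append, List.append_assoc] at hw_eq
      have h2 := List.append_cancel_left hw_eq
      -- h2 : replicate M a = replicate k a ++ c.2
      have hlen := congrArg List.length h2
      simp only [List.length_append, List.length_replicate] at hlen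
      have hc2ne : c.2 ≠ [] := by
        have := hWF p hp c hc; rw [hc1] at this; simpa using this
      have hc2len : 1 ≤ c.2.length := by
        cases c2e : c.2 with
        | nil => exact absurd c2e hc2ne
        | cons h t => simp [c2e]
      have hc2 : c.2 = List.replicate (M - k) a := by
        have hd := congrArg (List.drop k) h2
        rw [List.drop_replicate, List.drop_left' List.length_replicate] at hd
        exact hd.symm
      -- bb in selection language
      have hbb : List.replicate 2 b ∈ p.1 := by
        apply hPC p hp (List.replicate 2 b) (b :: List.replicate k a)
        exact hyp
      have hbbL : List.replicate 2 b ∈ G.lang := by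
        rw [hL]; right; rfl
      obtain ⟨x1, hx1, hrtg1⟩ := hbbL
      have hnew : (List.replicate 2 b ++ List.replicate (M - k) a) ∈ G.lang :=
        ⟨x1, hx1, hrtg1.tail ⟨p, hp, hbb, c, hc, by rw [hc1, hc2]; simp⟩⟩
      rw [hL] at hnew
      have hm1 : 1 ≤ M - k := by omega
      obtain ⟨m', hm'⟩ : ∃ m', M - k = m' + 1 := ⟨M - k - 1, by omega⟩
      rcases hnew with ⟨j, hj1, heq2⟩ | heq3
      · rw [hm'] at heq2
        have : a = b ∧ m' = j := by
          simpa [List.replicate_succ] using heq2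
        exact hab this.1
      · have := congrArg List.length heq3
        simp only [List.length_append, List.length_replicate,
          Set.mem_singleton_iff] at this
        omega
    · -- y = b^2 : length contradiction
      simp only [Set.mem_singleton_iff] at hy2
      subst hy2
      have hlen := congrArg List.length hw_eq
      simp only [List.length_append, List.length_replicate] at hlen
      omega
end
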